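/- Let ν be a probability measure on ℝ^D, let h > 0 and α ∈ ℝ, and let φ(x'|x) denote the density of the Gaussian N(αx, h·I_D) at x', so that ∇_{x'} log φ(x'|x) = −(x' − αx)/h. Define the noised density p(x') = ∫ φ(x'|x) dν(x), which is everywhere positive. Assume differentiation under the integral sign is valid, i.e. ∇p(x') = ∫ ∇_{x'} φ(x'|x) dν(x) for every x'. Then for every measurable s : ℝ^D → ℝ^D such that ∫ ‖s(x')‖₂² p(x') dx' < ∞ and ∫∫ ‖∇_{x'} log φ(x'|x)‖₂² φ(x'|x) dx' dν(x) < ∞ and ∫ ‖∇ log p(x')‖₂² p(x') dx' < ∞, one has ∫ ‖∇ log p(x') − s(x')‖₂² p(x') dx' = ∫∫ ‖∇_{x'} log φ(x'|x) − s(x')‖₂² φ(x'|x) dx' dν(x) + C, where C = ∫ ‖∇ log p(x')‖₂² p(x') dx' − ∫∫ ‖∇_{x'} log φ(x'|x)‖₂² φ(x'|x) dx' dν(x) does not depend on s. -/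

import Mathlib

open MeasureTheory Real

section Aux

variable {E : Type*} [NormedAddCommGroup E] [InnerProductSpace ℝ E] [CompleteSpace E]

lemma dsm_gaussian_hasGradientAt (c h : ℝ) (b x' : E) :
    HasGradientAt (fun y => c * Real.exp (-‖y - b‖ ^ 2 / (2 * h)))
      ((c * Real.exp (-‖x' - b‖ ^ 2 / (2 * h))) • ((-(1 / h)) • (x' - b))) x' := by
  have key : ∀ y : E, c * Real.exp (-‖y - b‖ ^ 2 / (2 * h))
      = c * Real.exp ((-(2 * h)⁻¹) * @inner ℝ E _ (y - b) (y - b)) := by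
    intro y
    rw [real_inner_self_eq_norm_sq]
    ring_nf
  have heq : (fun y : E => c * Real.exp (-‖y - b‖ ^ 2 / (2 * h)))
      = fun y => c * Real.exp ((-(2 * h)⁻¹) * @inner ℝ E _ (y - b) (y - b)) := funext key
  rw [heq]
  have h1 : HasFDerivAt (fun y : E => y - b) (ContinuousLinearMap.id ℝ E) x' :=
    (hasFDerivAt_id x').sub_const b
  have h2 := (h1.inner ℝ h1)
  have h3 := h2.const_mul (-(2 * h)⁻¹)
  have h4 := (Real.hasDerivAt_exp
    ((-(2 * h)⁻¹) * @inner ℝ E _ (x' - b) (x' - b))).comp_hasFDerivAt x' h3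
  have h5 := h4.const_mul c
  rw [hasGradientAt_iff_hasFDerivAt]
  refine h5.congr_fderiv ?_
  ext v
  simp only [InnerProductSpace.toDual_apply_apply, real_inner_smul_left,
    ContinuousLinearMap.coe_comp', Function.comp_apply, ContinuousLinearMap.coe_smul',
    Pi.smul_apply, ContinuousLinearMap.smul_apply, fderivInnerCLM_apply,
    ContinuousLinearMap.prod_apply, ContinuousLinearMap.coe_id', id_eq, smul_eq_mul]
  rw [real_inner_comm (x' - b) v, real_inner_self_eq_norm_sq (x' - b)]
  ring

end Aux

lemma dsm_texp_bound {h : ℝ} (hh : 0 < h) {t : ℝ} (ht : 0 ≤ t) :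
    t * Real.exp (-t ^ 2 / (2 * h)) ≤ Real.sqrt (2 * h) := by
  have h2 : (0:ℝ) < 2 * h := by linarith
  have hsq : Real.sqrt (2 * h) * Real.sqrt (2 * h) = 2 * h := Real.mul_self_sqrt h2.le
  rcases le_or_gt t (Real.sqrt (2 * h)) with hle | hgt
  · have : Real.exp (-t ^ 2 / (2 * h)) ≤ 1 := by
      apply Real.exp_le_one_iff.mpr
      have : 0 ≤ t ^ 2 / (2 * h) := by positivity
      linarith [neg_div (2 * h) (t ^ 2)]
    nlinarith
  · have ht0 : 0 < t := lt_of_le_of_lt (Real.sqrt_nonneg _) hgt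
    have hx : 0 < t ^ 2 / (2 * h) := by positivity
    have hxe : t ^ 2 / (2 * h) ≤ Real.exp (t ^ 2 / (2 * h)) := by
      have := Real.add_one_le_exp (t ^ 2 / (2 * h)); linarith
    have hexp : Real.exp (-t ^ 2 / (2 * h)) ≤ (t ^ 2 / (2 * h))⁻¹ := by
      rw [neg_div, Real.exp_neg]
      exact inv_anti₀ hx hxe
    have hb : t * Real.exp (-t ^ 2 / (2 * h)) ≤ t * (t ^ 2 / (2 * h))⁻¹ :=
      mul_le_mul_of_nonneg_left hexp ht0.le
    have heq : t * (t ^ 2 / (2 * h))⁻¹ = 2 * h / t := by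
      field_simp
    rw [heq] at hb
    have : 2 * h / t ≤ Real.sqrt (2 * h) := by
      rw [div_le_iff₀ ht0]
      nlinarith [hgt.le, Real.sqrt_nonneg (2 * h)]
    linarith

set_option maxHeartbeats 1000000 in
/-- **Denoising score matching equivalence (Proposition 1).** Let `ν` be a
probability measure on `ℝ^D`, `h > 0`, `α ∈ ℝ`, and let `φ(x'|x)` be the density
of `N(αx, h·I_D)`, so `∇_{x'} log φ(x'|x) = −(x' − αx)/h`. With noised density
`p(x') = ∫ φ(x'|x) dν(x)` (everywhere positive), score `∇ log p = ∇p/p`, and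
differentiation under the integral sign, for every measurable `s` with the
stated square-integrability,
`∫‖∇log p − s‖² p = ∫∫‖∇log φ − s‖² φ dν + C`, where
`C = ∫‖∇log p‖² p − ∫∫‖∇log φ‖² φ dν` does not depend on `s`. -/
theorem denoising_score_matching_equivalence (D : ℕ)
    (ν : Measure (EuclideanSpace ℝ (Fin D))) [IsProbabilityMeasure ν]
    (h α : ℝ) (hh : 0 < h)
    (φ : EuclideanSpace ℝ (Fin D) → EuclideanSpace ℝ (Fin D) → ℝ)
    (hφ : ∀ x' x, φ x' x
      = (2 * π * h) ^ (-(D : ℝ) / 2) * Real.exp (-‖x' - α • x‖ ^ 2 / (2 * h)))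
    (p : EuclideanSpace ℝ (Fin D) → ℝ)
    (hp : ∀ x', p x' = ∫ x, φ x' x ∂ν)
    (hppos : ∀ x', 0 < p x')
    (hdiff_under_int : ∀ x',
      gradient p x' = ∫ x, gradient (fun y => φ y x) x' ∂ν)
    (s : EuclideanSpace ℝ (Fin D) → EuclideanSpace ℝ (Fin D))
    (hs : Measurable s)
    (hint_s : Integrable (fun x' => ‖s x'‖ ^ 2 * p x') volume)
    (hint_φ : Integrable
      (fun q : EuclideanSpace ℝ (Fin D) × EuclideanSpace ℝ (Fin D) =>
        ‖(-(1 / h)) • (q.2 - α • q.1)‖ ^ 2 * φ q.2 q.1) (ν.prod volume))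
    (hint_p : Integrable (fun x' => ‖(p x')⁻¹ • gradient p x'‖ ^ 2 * p x') volume) :
    (∫ x', ‖(p x')⁻¹ • gradient p x' - s x'‖ ^ 2 * p x')
      = (∫ x, ∫ x', ‖(-(1 / h)) • (x' - α • x) - s x'‖ ^ 2 * φ x' x ∂volume ∂ν)
        + ((∫ x', ‖(p x')⁻¹ • gradient p x'‖ ^ 2 * p x')
            - ∫ x, ∫ x', ‖(-(1 / h)) • (x' - α • x)‖ ^ 2 * φ x' x ∂volume ∂ν) := by
  set c : ℝ := (2 * π * h) ^ (-(D : ℝ) / 2) with hc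
  have hπh : (0:ℝ) < 2 * π * h := by positivity
  have hcpos : 0 < c := Real.rpow_pos_of_pos hπh _
  have hφpos : ∀ x' x, 0 < φ x' x := fun x' x => by
    rw [hφ]; exact mul_pos hcpos (Real.exp_pos _)
  have hφle : ∀ x' x, φ x' x ≤ c := fun x' x => by
    rw [hφ]
    calc c * Real.exp (-‖x' - α • x‖ ^ 2 / (2 * h))
        ≤ c * 1 := by
          apply mul_le_mul_of_nonneg_left _ hcpos.le
          apply Real.exp_le_one_iff.mpr
          have h1 : (0:ℝ) ≤ ‖x' - α • x‖ ^ 2 / (2 * h) := by positivity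
          linarith [neg_div (2 * h) (‖x' - α • x‖ ^ 2)]
      _ = c := mul_one c
  -- continuity of φ (uncurried, both orders)
  have hφcont : Continuous fun q : EuclideanSpace ℝ (Fin D) × EuclideanSpace ℝ (Fin D) =>
      φ q.2 q.1 := by
    have : (fun q : EuclideanSpace ℝ (Fin D) × EuclideanSpace ℝ (Fin D) => φ q.2 q.1)
        = fun q => c * Real.exp (-‖q.2 - α • q.1‖ ^ 2 / (2 * h)) :=
      funext fun q => hφ q.2 q.1
    rw [this]; fun_prop
  have hφcont' : Continuous fun q : EuclideanSpace ℝ (Fin D) × EuclideanSpace ℝ (Fin D) =>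
      φ q.1 q.2 := hφcont.comp continuous_swap
  -- measurability of p
  have hpm : Measurable p := by
    have hpe : p = fun x' => ∫ x, φ x' x ∂ν := funext hp
    rw [hpe]
    exact (hφcont'.stronglyMeasurable.integral_prod_right).measurable
  -- measurability of gradient p
  have hgm : Measurable fun x' => gradient p x' := by
    have h1 : Measurable fun x' => fderiv ℝ p x' := measurable_fderiv ℝ p
    exact ((InnerProductSpace.toDual ℝ
      (EuclideanSpace ℝ (Fin D))).symm.continuous.measurable).comp h1
  -- gradient of φ in its first argument
  have hgrad : ∀ x x', gradient (fun y => φ y x) x'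
      = φ x' x • ((-(1 / h)) • (x' - α • x)) := by
    intro x x'
    have hfun : (fun y => φ y x) = fun y => c * Real.exp (-‖y - α • x‖ ^ 2 / (2 * h)) :=
      funext fun y => hφ y x
    rw [hfun, (dsm_gaussian_hasGradientAt c h (α • x) x').gradient, ← hφ]
  -- ν-integrability of φ-sections
  have hφsec : ∀ x', Integrable (fun x => φ x' x) ν := by
    intro x'
    apply Integrable.mono' (integrable_const c)
    · exact (hφcont.comp (continuous_id.prodMk continuous_const)).aestronglyMeasurable
    · filter_upwards with x
      rw [Real.norm_eq_abs, abs_of_pos (hφpos x' x)]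
      exact hφle x' x
  -- ν-integrability of the gradient sections (bounded)
  have hgint : ∀ x', Integrable (fun x => φ x' x • ((-(1 / h)) • (x' - α • x))) ν := by
    intro x'
    apply Integrable.mono' (integrable_const (c * (1 / h) * Real.sqrt (2 * h)))
    · apply Continuous.aestronglyMeasurable
      exact (hφcont.comp (continuous_id.prodMk continuous_const)).smul (by fun_prop)
    · filter_upwards with x
      rw [norm_smul, norm_smul, Real.norm_eq_abs, Real.norm_eq_abs,
        abs_of_pos (hφpos x' x)]
      have habs : |(-(1 / h))| = 1 / h := by
        rw [abs_neg, abs_of_pos (by positivity : (0:ℝ) < 1 / h)]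
      have hb := dsm_texp_bound hh (norm_nonneg (x' - α • x))
      have h1h : (0:ℝ) ≤ c * (1 / h) := by positivity
      calc φ x' x * (|(-(1 / h))| * ‖x' - α • x‖)
          = (c * (1 / h)) * (‖x' - α • x‖ * Real.exp (-‖x' - α • x‖ ^ 2 / (2 * h))) := by
            rw [hφ, habs]; ring
        _ ≤ (c * (1 / h)) * Real.sqrt (2 * h) := mul_le_mul_of_nonneg_left hb h1h
        _ = c * (1 / h) * Real.sqrt (2 * h) := by ring
  -- cross-term identity via differentiation under the integral
  have hX : ∀ x', (inner ℝ (s x') (gradient p x') : ℝ)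
      = ∫ x, (inner ℝ (s x') (φ x' x • ((-(1 / h)) • (x' - α • x))) : ℝ) ∂ν := by
    intro x'
    rw [hdiff_under_int x']
    have he : (fun x => gradient (fun y => φ y x) x')
        = fun x => φ x' x • ((-(1 / h)) • (x' - α • x)) := funext fun x => hgrad x x'
    rw [he]
    exact (integral_inner (hgint x') (s x')).symm
  -- measurability / integrability of product integrands
  have hF4meas : AEStronglyMeasurable
      (fun q : EuclideanSpace ℝ (Fin D) × EuclideanSpace ℝ (Fin D) =>
        ‖s q.2‖ ^ 2 * φ q.2 q.1) (ν.prod volume) :=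
    (((hs.comp measurable_snd).norm.pow_const 2).mul hφcont.measurable).aestronglyMeasurable
  have hF4 : Integrable
      (fun q : EuclideanSpace ℝ (Fin D) × EuclideanSpace ℝ (Fin D) =>
        ‖s q.2‖ ^ 2 * φ q.2 q.1) (ν.prod volume) := by
    rw [integrable_prod_iff' hF4meas]
    constructor
    · filter_upwards with x'
      exact (hφsec x').const_mul _
    · have he : (fun x' => ∫ x, ‖‖s x'‖ ^ 2 * φ x' x‖ ∂ν) = fun x' => ‖s x'‖ ^ 2 * p x' := by
        funext x'
        have e1 : ∀ x, ‖‖s x'‖ ^ 2 * φ x' x‖ = ‖s x'‖ ^ 2 * φ x' x := fun x => by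
          rw [Real.norm_eq_abs, abs_of_nonneg (mul_nonneg (by positivity) (hφpos x' x).le)]
        rw [integral_congr_ae (Filter.Eventually.of_forall e1), integral_const_mul _ _, ← hp]
      rw [he]; exact hint_s
  have hF3meas : Measurable
      (fun q : EuclideanSpace ℝ (Fin D) × EuclideanSpace ℝ (Fin D) =>
        (inner ℝ (s q.2) (φ q.2 q.1 • ((-(1 / h)) • (q.2 - α • q.1))) : ℝ)) := by
    apply Measurable.inner (hs.comp measurable_snd)
    exact (hφcont.smul (by fun_prop :
      Continuous fun q : EuclideanSpace ℝ (Fin D) × EuclideanSpace ℝ (Fin D) =>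
        (-(1 / h)) • (q.2 - α • q.1))).measurable
  have hF3 : Integrable
      (fun q : EuclideanSpace ℝ (Fin D) × EuclideanSpace ℝ (Fin D) =>
        (inner ℝ (s q.2) (φ q.2 q.1 • ((-(1 / h)) • (q.2 - α • q.1))) : ℝ)) (ν.prod volume) := by
    apply Integrable.mono' ((hint_φ.add hF4).const_mul (1 / 2))
      hF3meas.aestronglyMeasurable
    filter_upwards with q
    have h1 : |(inner ℝ (s q.2) (φ q.2 q.1 • ((-(1 / h)) • (q.2 - α • q.1))) : ℝ)|
        ≤ ‖s q.2‖ * ‖φ q.2 q.1 • ((-(1 / h)) • (q.2 - α • q.1))‖ := abs_real_inner_le_norm _ _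
    have h2 : ‖φ q.2 q.1 • ((-(1 / h)) • (q.2 - α • q.1))‖
        = φ q.2 q.1 * ‖(-(1 / h)) • (q.2 - α • q.1)‖ := by
      rw [norm_smul, Real.norm_eq_abs, abs_of_pos (hφpos _ _)]
    rw [Real.norm_eq_abs]
    simp only [Pi.add_apply]
    nlinarith [mul_nonneg (hφpos q.2 q.1).le
        (sq_nonneg (‖(-(1 / h)) • (q.2 - α • q.1)‖ - ‖s q.2‖)),
      norm_nonneg (s q.2), norm_nonneg ((-(1 / h)) • (q.2 - α • q.1)), (hφpos q.2 q.1)]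
  -- pointwise expansion on the φ side
  have hpt : ∀ q : EuclideanSpace ℝ (Fin D) × EuclideanSpace ℝ (Fin D),
      ‖(-(1 / h)) • (q.2 - α • q.1) - s q.2‖ ^ 2 * φ q.2 q.1
      = ‖(-(1 / h)) • (q.2 - α • q.1)‖ ^ 2 * φ q.2 q.1
        - 2 * (inner ℝ (s q.2) (φ q.2 q.1 • ((-(1 / h)) • (q.2 - α • q.1))) : ℝ)
        + ‖s q.2‖ ^ 2 * φ q.2 q.1 := by
    intro q
    rw [norm_sub_sq_real, real_inner_smul_right,
      real_inner_comm ((-(1 / h)) • (q.2 - α • q.1)) (s q.2)]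
    ring
  have hF1 : Integrable
      (fun q : EuclideanSpace ℝ (Fin D) × EuclideanSpace ℝ (Fin D) =>
        ‖(-(1 / h)) • (q.2 - α • q.1) - s q.2‖ ^ 2 * φ q.2 q.1) (ν.prod volume) := by
    have he := funext hpt
    rw [he]
    exact (hint_φ.sub (hF3.const_mul 2)).add hF4
  -- pointwise expansion on the p side
  have hptL : ∀ x', ‖(p x')⁻¹ • gradient p x' - s x'‖ ^ 2 * p x'
      = ‖(p x')⁻¹ • gradient p x'‖ ^ 2 * p x'
        - 2 * (inner ℝ (s x') (gradient p x') : ℝ) + ‖s x'‖ ^ 2 * p x' := by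
    intro x'
    have hpne : p x' ≠ 0 := (hppos x').ne'
    rw [norm_sub_sq_real, real_inner_smul_left, real_inner_comm (gradient p x') (s x')]
    field_simp
  have hXint : Integrable (fun x' => (inner ℝ (s x') (gradient p x') : ℝ)) volume := by
    apply Integrable.mono' ((hint_p.add hint_s).const_mul (1 / 2))
      (hs.inner hgm).aestronglyMeasurable
    filter_upwards with x'
    have hpne : p x' ≠ 0 := (hppos x').ne'
    have h1 : (inner ℝ (s x') (gradient p x') : ℝ)
        = p x' * (inner ℝ (s x') ((p x')⁻¹ • gradient p x') : ℝ) := by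
      rw [real_inner_smul_right]; field_simp
    rw [Real.norm_eq_abs, h1, abs_mul, abs_of_pos (hppos x')]
    simp only [Pi.add_apply]
    have h2 : |(inner ℝ (s x') ((p x')⁻¹ • gradient p x') : ℝ)|
        ≤ ‖s x'‖ * ‖(p x')⁻¹ • gradient p x'‖ := abs_real_inner_le_norm _ _
    nlinarith [mul_nonneg (hppos x').le
        (sq_nonneg (‖(p x')⁻¹ • gradient p x'‖ - ‖s x'‖)),
      norm_nonneg (s x'), norm_nonneg ((p x')⁻¹ • gradient p x'), (hppos x')]
  -- expand the LHS
  have hL : (∫ x', ‖(p x')⁻¹ • gradient p x' - s x'‖ ^ 2 * p x')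
      = (∫ x', ‖(p x')⁻¹ • gradient p x'‖ ^ 2 * p x')
        - 2 * (∫ x', (inner ℝ (s x') (gradient p x') : ℝ))
        + ∫ x', ‖s x'‖ ^ 2 * p x' := by
    have h1 : Integrable (fun x' => ‖(p x')⁻¹ • gradient p x'‖ ^ 2 * p x'
        - 2 * (inner ℝ (s x') (gradient p x') : ℝ)) volume := by
      exact hint_p.sub (hXint.const_mul 2)
    simp only [hptL]
    rw [integral_add h1 hint_s, integral_sub hint_p (hXint.const_mul 2),
      integral_const_mul _ _]
  -- expand the RHS double integral
  have hF3eq : (∫ q, (inner ℝ (s q.2) (φ q.2 q.1 • ((-(1 / h)) • (q.2 - α • q.1))) : ℝ)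
        ∂(ν.prod volume))
      = ∫ x', (inner ℝ (s x') (gradient p x') : ℝ) := by
    rw [integral_prod_symm _ hF3]
    exact integral_congr_ae (Filter.Eventually.of_forall fun x' => (hX x').symm)
  have hF4eq : (∫ q, ‖s q.2‖ ^ 2 * φ q.2 q.1 ∂(ν.prod volume))
      = ∫ x', ‖s x'‖ ^ 2 * p x' := by
    rw [integral_prod_symm _ hF4]
    apply integral_congr_ae (Filter.Eventually.of_forall fun x' => ?_)
    show (∫ x, ‖s x'‖ ^ 2 * φ x' x ∂ν) = ‖s x'‖ ^ 2 * p x'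
    rw [integral_const_mul _ _, ← hp]
  have hR : (∫ x, ∫ x', ‖(-(1 / h)) • (x' - α • x) - s x'‖ ^ 2 * φ x' x ∂volume ∂ν)
      = (∫ x, ∫ x', ‖(-(1 / h)) • (x' - α • x)‖ ^ 2 * φ x' x ∂volume ∂ν)
        - 2 * (∫ x', (inner ℝ (s x') (gradient p x') : ℝ))
        + ∫ x', ‖s x'‖ ^ 2 * p x' := by
    have h1 : Integrable
        (fun q : EuclideanSpace ℝ (Fin D) × EuclideanSpace ℝ (Fin D) =>
          ‖(-(1 / h)) • (q.2 - α • q.1)‖ ^ 2 * φ q.2 q.1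
            - 2 * (inner ℝ (s q.2) (φ q.2 q.1 • ((-(1 / h)) • (q.2 - α • q.1))) : ℝ))
        (ν.prod volume) := by
      exact hint_φ.sub (hF3.const_mul 2)
    rw [← integral_prod _ hF1, ← integral_prod _ hint_φ]
    simp only [hpt]
    rw [integral_add h1 hF4, integral_sub hint_φ (hF3.const_mul 2),
      integral_const_mul _ _, hF3eq, hF4eq]
  rw [hL, hR]
  ring
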